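/- There is no arrangement of at most 5 hyperplanes in ℝ^4 that slices each edge of the 4-dimensional unit cube at least twice, where a hyperplane slices an edge if it meets the relative interior of the edge and contains no vertex of the cube. -/

import Mathlib

/-- The hyperplane `{x | ∑ j, a j * x j = b}` slices the edge of the unit cube between
adjacent vertices `u, w`: it meets the relative interior of the edge and contains no
vertex of the cube. -/
def SlicesEdge (n : ℕ) (a : Fin n → ℝ) (b : ℝ) (u w : Fin n → Bool) : Prop :=
  (∀ z : Fin n → Bool, ∑ j, a j * (if z j then (1 : ℝ) else 0) ≠ b) ∧
  ∃ t : ℝ, t ∈ Set.Ioo (0 : ℝ) 1 ∧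
    ∑ j, a j * ((1 - t) * (if u j then (1 : ℝ) else 0) + t * (if w j then (1 : ℝ) else 0)) = b

def thrMask : ℕ := 114774088598426388869345543170584872251251517579821845869595883549889770814911
def toN (b : Bool) : ℕ := cond b 1 0
def V (m : ℕ) : Fin 4 → Bool := fun j => m.testBit j.val
noncomputable def val (A : Fin 4 → ℝ) (z : Fin 4 → Bool) : ℝ :=
  ∑ j, A j * (if z j then (1 : ℝ) else 0)
def L : List (ℕ × ℕ) := [(0, 1), (0, 2), (0, 4), (0, 8), (1, 0), (1, 3), (1, 5), (1, 9), (2, 3), (2, 0), (2, 6), (2, 10), (3, 2), (3, 1), (3, 7), (3, 11), (4, 5), (4, 6), (4, 0), (4, 12), (5, 4), (5, 7), (5, 1), (5, 13), (6, 7), (6, 4), (6, 2), (6, 14), (7, 6), (7, 5), (7, 3), (7, 15), (8, 9), (8, 10), (8, 12), (8, 0), (9, 8), (9, 11), (9, 13), (9, 1), (10, 11), (10, 8), (10, 14), (10, 2), (11, 10), (11, 9), (11, 15), (11, 3), (12, 13), (12, 14), (12, 8), (12, 4), (13, 12), (13, 15), (13, 9), (13, 5), (14, 15), (14, 12), (14,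 10), (14, 6), (15, 14), (15, 13), (15, 11), (15, 7)]

set_option maxHeartbeats 4000000 in
theorem comb : ∀ s0 s1 s2 s3 s4 s5 s6 s7 s8 s9 s10 s11 s12 s13 s14 s15 : Bool,
    ((Nat.testBit thrMask (toN s0 + 2 * toN s8 + 4 * toN s4 + 8 * toN s12 + 16 * toN s2 + 32 * toN s10 + 64 * toN s6 + 128 * toN s14) = true) ∧ (Nat.testBit thrMask (toN s1 + 2 * toN s9 + 4 * toN s5 + 8 * toN s13 + 16 * toN s3 + 32 * toN s11 + 64 * toN s7 + 128 * toN s15) = true) ∧ (Nat.testBit thrMask (toN s0 + 2 * toN s8 + 4 * toN s4 + 8 * toN s12 + 16 * toN s1 + 32 * toN s9 + 64 * toN s5 + 128 * toN s13) = true) ∧ (Nat.testBit thrMask (toN s2 + 2 * toN s10 + 4 * toN s6 + 8 * toN s14 + 16 * toN s3 + 32 * toN s11 + 64 * toN s7 + 128 * toN s15) = true) ∧ (Nat.testBit thrMask (toN s0 + 2 * toN s8 + 4 * toN s2 + 8 * toN s10 + 16 * toN s1 + 32 * toN s9 + 64 * toN s3 + 128 * toN s11) = true) ∧ (Nat.testBit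 thrMask (toN s4 + 2 * toN s12 + 4 * toN s6 + 8 * toN s14 + 16 * toN s5 + 32 * toN s13 + 64 * toN s7 + 128 * toN s15) = true) ∧ (Nat.testBit thrMask (toN s0 + 2 * toN s4 + 4 * toN s2 + 8 * toN s6 + 16 * toN s1 + 32 * toN s5 + 64 * toN s3 + 128 * toN s7) = true) ∧ (Nat.testBit thrMask (toN s8 + 2 * toN s12 + 4 * toN s10 + 8 * toN s14 + 16 * toN s9 + 32 * toN s13 + 64 * toN s11 + 128 * toN s15) = true)) →
    ((if s0 ≠ s1 then 1 else 0) + ((if s0 ≠ s2 then 1 else 0) + ((if s0 ≠ s4 then 1 else 0) + ((if s0 ≠ s8 then 1 else 0) + ((if s1 ≠ s0 then 1 else 0) + ((if s1 ≠ s3 then 1 else 0) + ((if s1 ≠ s5 then 1 else 0) + ((if s1 ≠ s9 then 1 else 0) + ((if s2 ≠ s3 then 1 else 0) + ((if s2 ≠ s0 then 1 else 0) + ((if s2 ≠ s6 then 1 else 0) + ((if s2 ≠ s10 then 1 else 0) + ((if s3 ≠ s2 then 1 else 0) + ((if s3 ≠ s1 then 1 else 0) + ((if s3 ≠ s7 then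 1 else 0) + ((if s3 ≠ s11 then 1 else 0) + ((if s4 ≠ s5 then 1 else 0) + ((if s4 ≠ s6 then 1 else 0) + ((if s4 ≠ s0 then 1 else 0) + ((if s4 ≠ s12 then 1 else 0) + ((if s5 ≠ s4 then 1 else 0) + ((if s5 ≠ s7 then 1 else 0) + ((if s5 ≠ s1 then 1 else 0) + ((if s5 ≠ s13 then 1 else 0) + ((if s6 ≠ s7 then 1 else 0) + ((if s6 ≠ s4 then 1 else 0) + ((if s6 ≠ s2 then 1 else 0) + ((if s6 ≠ s14 then 1 else 0) + ((if s7 ≠ s6 then 1 else 0) + ((if s7 ≠ s5 then 1 else 0) + ((if s7 ≠ s3 then 1 else 0) + ((if s7 ≠ s15 then 1 else 0) + ((if s8 ≠ s9 then 1 else 0) + ((if s8 ≠ s10 then 1 else 0) + ((if s8 ≠ s12 then 1 else 0) + ((if s8 ≠ s0 then 1 else 0) + ((if s9 ≠ s8 then 1 else 0) + ((if s9 ≠ s11 then 1 else 0) + ((if s9 ≠ s13 then 1 else 0) + ((if s9 ≠ s1 then 1 else 0) + ((if s10 ≠ s11 then 1 else 0) + ((if s10 ≠ s8 then 1 else 0)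 + ((if s10 ≠ s14 then 1 else 0) + ((if s10 ≠ s2 then 1 else 0) + ((if s11 ≠ s10 then 1 else 0) + ((if s11 ≠ s9 then 1 else 0) + ((if s11 ≠ s15 then 1 else 0) + ((if s11 ≠ s3 then 1 else 0) + ((if s12 ≠ s13 then 1 else 0) + ((if s12 ≠ s14 then 1 else 0) + ((if s12 ≠ s8 then 1 else 0) + ((if s12 ≠ s4 then 1 else 0) + ((if s13 ≠ s12 then 1 else 0) + ((if s13 ≠ s15 then 1 else 0) + ((if s13 ≠ s9 then 1 else 0) + ((if s13 ≠ s5 then 1 else 0) + ((if s14 ≠ s15 then 1 else 0) + ((if s14 ≠ s12 then 1 else 0) + ((if s14 ≠ s10 then 1 else 0) + ((if s14 ≠ s6 then 1 else 0) + ((if s15 ≠ s14 then 1 else 0) + ((if s15 ≠ s13 then 1 else 0) + ((if s15 ≠ s11 then 1 else 0) + ((if s15 ≠ s7 then 1 else 0)))))))))))))))))))))))))))))))))))))))))))))))))))))))))))))))) : ℕ) ≤ 24 := by decide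

set_option maxHeartbeats 4000000 in
theorem thr3 (w0 d1 d2 d3 b : ℝ) (n0 : w0 ≠ b) (n1 : w0 + d1 ≠ b) (n2 : w0 + d2 ≠ b) (n3 : w0 + d1 + d2 ≠ b) (n4 : w0 + d3 ≠ b) (n5 : w0 + d1 + d3 ≠ b) (n6 : w0 + d2 + d3 ≠ b) (n7 : w0 + d1 + d2 + d3 ≠ b) :
    Nat.testBit thrMask (toN (decide (b < w0)) + 2 * toN (decide (b < w0 + d1)) + 4 * toN (decide (b < w0 + d2)) + 8 * toN (decide (b < w0 + d1 + d2)) + 16 * toN (decide (b < w0 + d3)) + 32 * toN (decide (b < w0 + d1 + d3)) + 64 * toN (decide (b < w0 + d2 + d3)) + 128 * toN (decide (b < w0 + d1 + d2 + d3))) = true := by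
  rcases n0.lt_or_gt with h0 | h0 <;>
    rcases n1.lt_or_gt with h1 | h1 <;>
    rcases n2.lt_or_gt with h2 | h2 <;>
    rcases n3.lt_or_gt with h3 | h3 <;>
    rcases n4.lt_or_gt with h4 | h4 <;>
    rcases n5.lt_or_gt with h5 | h5 <;>
    rcases n6.lt_or_gt with h6 | h6 <;>
    rcases n7.lt_or_gt with h7 | h7 <;>
    first
      | (simp only [h0, h0.asymm, h1, h1.asymm, h2, h2.asymm, h3, h3.asymm, h4, h4.asymm, h5, h5.asymm, h6, h6.asymm, h7, h7.asymm, decide_true, decide_false]; decide)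
      | linarith

lemma swapLemma {α : Type*} {k : ℕ} (g : Fin k → α → ℕ) (l : List α) :
    (l.map fun p => ∑ i, g i p).sum = ∑ i, (l.map (g i)).sum := by
  induction l with
  | nil => simp
  | cons x t ih => simp [ih, Finset.sum_add_distrib]

lemma two_mul_length_le_sum (l : List ℕ) (h : ∀ x ∈ l, 2 ≤ x) : 2 * l.length ≤ l.sum := by
  induction l with
  | nil => simp
  | cons x t ih =>
      simp only [List.length_cons, List.sum_cons]
      have := h x (by simp)
      have := ih (fun y hy => h y (by simp [hy]))
      omega

lemma slice_sign {A : Fin 4 → ℝ} {B : ℝ} {u w : Fin 4 → Bool}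
    (h : SlicesEdge 4 A B u w) :
    decide (B < val A u) ≠ decide (B < val A w) := by
  obtain ⟨hv, t, ⟨ht0, ht1⟩, heq⟩ := h
  have hu : val A u ≠ B := hv u
  have hw : val A w ≠ B := hv w
  have hsum : (1 - t) * val A u + t * val A w = B := by
    rw [← heq]; unfold val
    rw [Finset.mul_sum, Finset.mul_sum, ← Finset.sum_add_distrib]
    exact Finset.sum_congr rfl fun j _ => by ring
  intro hcontra
  have hiff := decide_eq_decide.mp hcontra
  rcases hu.lt_or_gt with h1 | h1 <;> rcases hw.lt_or_gt with h2 | h2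
  · linarith [mul_lt_mul_of_pos_left h1 (show (0:ℝ) < 1 - t by linarith),
      mul_lt_mul_of_pos_left h2 ht0]
  · exact absurd (hiff.mpr h2) (by linarith)
  · exact absurd (hiff.mp h1) (by linarith)
  · linarith [mul_lt_mul_of_pos_left h1 (show (0:ℝ) < 1 - t by linarith),
      mul_lt_mul_of_pos_left h2 ht0]

lemma perPlane {A : Fin 4 → ℝ} {B : ℝ}
    (hvert : ∀ z : Fin 4 → Bool, val A z ≠ B) :
    (L.map fun p => if decide (B < val A (V p.1)) ≠ decide (B < val A (V p.2))
      then 1 else 0).sum ≤ 24 := by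
    have hv0_0 : val A (V 0) = (0:ℝ) := by
      simp [val, Fin.sum_univ_four, show V 0 = ![false,false,false,false] from by decide]
      try ring
    have nn0_0 : (0:ℝ) ≠ B := by rw [← hv0_0]; exact hvert (V 0)
    have hv0_1 : val A (V 8) = (0:ℝ) + A 3 := by
      simp [val, Fin.sum_univ_four, show V 8 = ![false,false,false,true] from by decide]
      try ring
    have nn0_1 : (0:ℝ) + A 3 ≠ B := by rw [← hv0_1]; exact hvert (V 8)
    have hv0_2 : val A (V 4) = (0:ℝ) + A 2 := by
      simp [val, Fin.sum_univ_four, show V 4 = ![false,false,true,false] from by decide]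
      try ring
    have nn0_2 : (0:ℝ) + A 2 ≠ B := by rw [← hv0_2]; exact hvert (V 4)
    have hv0_3 : val A (V 12) = (0:ℝ) + A 3 + A 2 := by
      simp [val, Fin.sum_univ_four, show V 12 = ![false,false,true,true] from by decide]
      try ring
    have nn0_3 : (0:ℝ) + A 3 + A 2 ≠ B := by rw [← hv0_3]; exact hvert (V 12)
    have hv0_4 : val A (V 2) = (0:ℝ) + A 1 := by
      simp [val, Fin.sum_univ_four, show V 2 = ![false,true,false,false] from by decide]
      try ring
    have nn0_4 : (0:ℝ) + A 1 ≠ B := by rw [← hv0_4]; exact hvert (V 2)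
    have hv0_5 : val A (V 10) = (0:ℝ) + A 3 + A 1 := by
      simp [val, Fin.sum_univ_four, show V 10 = ![false,true,false,true] from by decide]
      try ring
    have nn0_5 : (0:ℝ) + A 3 + A 1 ≠ B := by rw [← hv0_5]; exact hvert (V 10)
    have hv0_6 : val A (V 6) = (0:ℝ) + A 2 + A 1 := by
      simp [val, Fin.sum_univ_four, show V 6 = ![false,true,true,false] from by decide]
      try ring
    have nn0_6 : (0:ℝ) + A 2 + A 1 ≠ B := by rw [← hv0_6]; exact hvert (V 6)
    have hv0_7 : val A (V 14) = (0:ℝ) + A 3 + A 2 + A 1 := by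
      simp [val, Fin.sum_univ_four, show V 14 = ![false,true,true,true] from by decide]
      try ring
    have nn0_7 : (0:ℝ) + A 3 + A 2 + A 1 ≠ B := by rw [← hv0_7]; exact hvert (V 14)
    have G0 : Nat.testBit thrMask (toN (decide (B < val A (V 0))) + 2 * toN (decide (B < val A (V 8))) + 4 * toN (decide (B < val A (V 4))) + 8 * toN (decide (B < val A (V 12))) + 16 * toN (decide (B < val A (V 2))) + 32 * toN (decide (B < val A (V 10))) + 64 * toN (decide (B < val A (V 6))) + 128 * toN (decide (B < val A (V 14)))) = true := by
      rw [hv0_0, hv0_1, hv0_2, hv0_3, hv0_4, hv0_5, hv0_6, hv0_7]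
      exact thr3 (0:ℝ) (A 3) (A 2) (A 1) B nn0_0 nn0_1 nn0_2 nn0_3 nn0_4 nn0_5 nn0_6 nn0_7
    have hv1_0 : val A (V 1) = A 0 := by
      simp [val, Fin.sum_univ_four, show V 1 = ![true,false,false,false] from by decide]
      try ring
    have nn1_0 : A 0 ≠ B := by rw [← hv1_0]; exact hvert (V 1)
    have hv1_1 : val A (V 9) = A 0 + A 3 := by
      simp [val, Fin.sum_univ_four, show V 9 = ![true,false,false,true] from by decide]
      try ring
    have nn1_1 : A 0 + A 3 ≠ B := by rw [← hv1_1]; exact hvert (V 9)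
    have hv1_2 : val A (V 5) = A 0 + A 2 := by
      simp [val, Fin.sum_univ_four, show V 5 = ![true,false,true,false] from by decide]
      try ring
    have nn1_2 : A 0 + A 2 ≠ B := by rw [← hv1_2]; exact hvert (V 5)
    have hv1_3 : val A (V 13) = A 0 + A 3 + A 2 := by
      simp [val, Fin.sum_univ_four, show V 13 = ![true,false,true,true] from by decide]
      try ring
    have nn1_3 : A 0 + A 3 + A 2 ≠ B := by rw [← hv1_3]; exact hvert (V 13)
    have hv1_4 : val A (V 3) = A 0 + A 1 := by
      simp [val, Fin.sum_univ_four, show V 3 = ![true,true,false,false] from by decide]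
      try ring
    have nn1_4 : A 0 + A 1 ≠ B := by rw [← hv1_4]; exact hvert (V 3)
    have hv1_5 : val A (V 11) = A 0 + A 3 + A 1 := by
      simp [val, Fin.sum_univ_four, show V 11 = ![true,true,false,true] from by decide]
      try ring
    have nn1_5 : A 0 + A 3 + A 1 ≠ B := by rw [← hv1_5]; exact hvert (V 11)
    have hv1_6 : val A (V 7) = A 0 + A 2 + A 1 := by
      simp [val, Fin.sum_univ_four, show V 7 = ![true,true,true,false] from by decide]
      try ring
    have nn1_6 : A 0 + A 2 + A 1 ≠ B := by rw [← hv1_6]; exact hvert (V 7)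
    have hv1_7 : val A (V 15) = A 0 + A 3 + A 2 + A 1 := by
      simp [val, Fin.sum_univ_four, show V 15 = ![true,true,true,true] from by decide]
      try ring
    have nn1_7 : A 0 + A 3 + A 2 + A 1 ≠ B := by rw [← hv1_7]; exact hvert (V 15)
    have G1 : Nat.testBit thrMask (toN (decide (B < val A (V 1))) + 2 * toN (decide (B < val A (V 9))) + 4 * toN (decide (B < val A (V 5))) + 8 * toN (decide (B < val A (V 13))) + 16 * toN (decide (B < val A (V 3))) + 32 * toN (decide (B < val A (V 11))) + 64 * toN (decide (B < val A (V 7))) + 128 * toN (decide (B < val A (V 15)))) = true := by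
      rw [hv1_0, hv1_1, hv1_2, hv1_3, hv1_4, hv1_5, hv1_6, hv1_7]
      exact thr3 (A 0) (A 3) (A 2) (A 1) B nn1_0 nn1_1 nn1_2 nn1_3 nn1_4 nn1_5 nn1_6 nn1_7
    have hv2_0 : val A (V 0) = (0:ℝ) := by
      simp [val, Fin.sum_univ_four, show V 0 = ![false,false,false,false] from by decide]
      try ring
    have nn2_0 : (0:ℝ) ≠ B := by rw [← hv2_0]; exact hvert (V 0)
    have hv2_1 : val A (V 8) = (0:ℝ) + A 3 := by
      simp [val, Fin.sum_univ_four, show V 8 = ![false,false,false,true] from by decide]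
      try ring
    have nn2_1 : (0:ℝ) + A 3 ≠ B := by rw [← hv2_1]; exact hvert (V 8)
    have hv2_2 : val A (V 4) = (0:ℝ) + A 2 := by
      simp [val, Fin.sum_univ_four, show V 4 = ![false,false,true,false] from by decide]
      try ring
    have nn2_2 : (0:ℝ) + A 2 ≠ B := by rw [← hv2_2]; exact hvert (V 4)
    have hv2_3 : val A (V 12) = (0:ℝ) + A 3 + A 2 := by
      simp [val, Fin.sum_univ_four, show V 12 = ![false,false,true,true] from by decide]
      try ring
    have nn2_3 : (0:ℝ) + A 3 + A 2 ≠ B := by rw [← hv2_3]; exact hvert (V 12)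
    have hv2_4 : val A (V 1) = (0:ℝ) + A 0 := by
      simp [val, Fin.sum_univ_four, show V 1 = ![true,false,false,false] from by decide]
      try ring
    have nn2_4 : (0:ℝ) + A 0 ≠ B := by rw [← hv2_4]; exact hvert (V 1)
    have hv2_5 : val A (V 9) = (0:ℝ) + A 3 + A 0 := by
      simp [val, Fin.sum_univ_four, show V 9 = ![true,false,false,true] from by decide]
      try ring
    have nn2_5 : (0:ℝ) + A 3 + A 0 ≠ B := by rw [← hv2_5]; exact hvert (V 9)
    have hv2_6 : val A (V 5) = (0:ℝ) + A 2 + A 0 := by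
      simp [val, Fin.sum_univ_four, show V 5 = ![true,false,true,false] from by decide]
      try ring
    have nn2_6 : (0:ℝ) + A 2 + A 0 ≠ B := by rw [← hv2_6]; exact hvert (V 5)
    have hv2_7 : val A (V 13) = (0:ℝ) + A 3 + A 2 + A 0 := by
      simp [val, Fin.sum_univ_four, show V 13 = ![true,false,true,true] from by decide]
      try ring
    have nn2_7 : (0:ℝ) + A 3 + A 2 + A 0 ≠ B := by rw [← hv2_7]; exact hvert (V 13)
    have G2 : Nat.testBit thrMask (toN (decide (B < val A (V 0))) + 2 * toN (decide (B < val A (V 8))) + 4 * toN (decide (B < val A (V 4))) + 8 * toN (decide (B < val A (V 12))) + 16 * toN (decide (B < val A (V 1))) + 32 * toN (decide (B < val A (V 9))) + 64 * toN (decide (B < val A (V 5))) + 128 * toN (decide (B < val A (V 13)))) = true := by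
      rw [hv2_0, hv2_1, hv2_2, hv2_3, hv2_4, hv2_5, hv2_6, hv2_7]
      exact thr3 (0:ℝ) (A 3) (A 2) (A 0) B nn2_0 nn2_1 nn2_2 nn2_3 nn2_4 nn2_5 nn2_6 nn2_7
    have hv3_0 : val A (V 2) = A 1 := by
      simp [val, Fin.sum_univ_four, show V 2 = ![false,true,false,false] from by decide]
      try ring
    have nn3_0 : A 1 ≠ B := by rw [← hv3_0]; exact hvert (V 2)
    have hv3_1 : val A (V 10) = A 1 + A 3 := by
      simp [val, Fin.sum_univ_four, show V 10 = ![false,true,false,true] from by decide]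
      try ring
    have nn3_1 : A 1 + A 3 ≠ B := by rw [← hv3_1]; exact hvert (V 10)
    have hv3_2 : val A (V 6) = A 1 + A 2 := by
      simp [val, Fin.sum_univ_four, show V 6 = ![false,true,true,false] from by decide]
      try ring
    have nn3_2 : A 1 + A 2 ≠ B := by rw [← hv3_2]; exact hvert (V 6)
    have hv3_3 : val A (V 14) = A 1 + A 3 + A 2 := by
      simp [val, Fin.sum_univ_four, show V 14 = ![false,true,true,true] from by decide]
      try ring
    have nn3_3 : A 1 + A 3 + A 2 ≠ B := by rw [← hv3_3]; exact hvert (V 14)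
    have hv3_4 : val A (V 3) = A 1 + A 0 := by
      simp [val, Fin.sum_univ_four, show V 3 = ![true,true,false,false] from by decide]
      try ring
    have nn3_4 : A 1 + A 0 ≠ B := by rw [← hv3_4]; exact hvert (V 3)
    have hv3_5 : val A (V 11) = A 1 + A 3 + A 0 := by
      simp [val, Fin.sum_univ_four, show V 11 = ![true,true,false,true] from by decide]
      try ring
    have nn3_5 : A 1 + A 3 + A 0 ≠ B := by rw [← hv3_5]; exact hvert (V 11)
    have hv3_6 : val A (V 7) = A 1 + A 2 + A 0 := by
      simp [val, Fin.sum_univ_four, show V 7 = ![true,true,true,false] from by decide]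
      try ring
    have nn3_6 : A 1 + A 2 + A 0 ≠ B := by rw [← hv3_6]; exact hvert (V 7)
    have hv3_7 : val A (V 15) = A 1 + A 3 + A 2 + A 0 := by
      simp [val, Fin.sum_univ_four, show V 15 = ![true,true,true,true] from by decide]
      try ring
    have nn3_7 : A 1 + A 3 + A 2 + A 0 ≠ B := by rw [← hv3_7]; exact hvert (V 15)
    have G3 : Nat.testBit thrMask (toN (decide (B < val A (V 2))) + 2 * toN (decide (B < val A (V 10))) + 4 * toN (decide (B < val A (V 6))) + 8 * toN (decide (B < val A (V 14))) + 16 * toN (decide (B < val A (V 3))) + 32 * toN (decide (B < val A (V 11))) + 64 * toN (decide (B < val A (V 7))) + 128 * toN (decide (B < val A (V 15)))) = true := by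
      rw [hv3_0, hv3_1, hv3_2, hv3_3, hv3_4, hv3_5, hv3_6, hv3_7]
      exact thr3 (A 1) (A 3) (A 2) (A 0) B nn3_0 nn3_1 nn3_2 nn3_3 nn3_4 nn3_5 nn3_6 nn3_7
    have hv4_0 : val A (V 0) = (0:ℝ) := by
      simp [val, Fin.sum_univ_four, show V 0 = ![false,false,false,false] from by decide]
      try ring
    have nn4_0 : (0:ℝ) ≠ B := by rw [← hv4_0]; exact hvert (V 0)
    have hv4_1 : val A (V 8) = (0:ℝ) + A 3 := by
      simp [val, Fin.sum_univ_four, show V 8 = ![false,false,false,true] from by decide]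
      try ring
    have nn4_1 : (0:ℝ) + A 3 ≠ B := by rw [← hv4_1]; exact hvert (V 8)
    have hv4_2 : val A (V 2) = (0:ℝ) + A 1 := by
      simp [val, Fin.sum_univ_four, show V 2 = ![false,true,false,false] from by decide]
      try ring
    have nn4_2 : (0:ℝ) + A 1 ≠ B := by rw [← hv4_2]; exact hvert (V 2)
    have hv4_3 : val A (V 10) = (0:ℝ) + A 3 + A 1 := by
      simp [val, Fin.sum_univ_four, show V 10 = ![false,true,false,true] from by decide]
      try ring
    have nn4_3 : (0:ℝ) + A 3 + A 1 ≠ B := by rw [← hv4_3]; exact hvert (V 10)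
    have hv4_4 : val A (V 1) = (0:ℝ) + A 0 := by
      simp [val, Fin.sum_univ_four, show V 1 = ![true,false,false,false] from by decide]
      try ring
    have nn4_4 : (0:ℝ) + A 0 ≠ B := by rw [← hv4_4]; exact hvert (V 1)
    have hv4_5 : val A (V 9) = (0:ℝ) + A 3 + A 0 := by
      simp [val, Fin.sum_univ_four, show V 9 = ![true,false,false,true] from by decide]
      try ring
    have nn4_5 : (0:ℝ) + A 3 + A 0 ≠ B := by rw [← hv4_5]; exact hvert (V 9)
    have hv4_6 : val A (V 3) = (0:ℝ) + A 1 + A 0 := by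
      simp [val, Fin.sum_univ_four, show V 3 = ![true,true,false,false] from by decide]
      try ring
    have nn4_6 : (0:ℝ) + A 1 + A 0 ≠ B := by rw [← hv4_6]; exact hvert (V 3)
    have hv4_7 : val A (V 11) = (0:ℝ) + A 3 + A 1 + A 0 := by
      simp [val, Fin.sum_univ_four, show V 11 = ![true,true,false,true] from by decide]
      try ring
    have nn4_7 : (0:ℝ) + A 3 + A 1 + A 0 ≠ B := by rw [← hv4_7]; exact hvert (V 11)
    have G4 : Nat.testBit thrMask (toN (decide (B < val A (V 0))) + 2 * toN (decide (B < val A (V 8))) + 4 * toN (decide (B < val A (V 2))) + 8 * toN (decide (B < val A (V 10))) + 16 * toN (decide (B < val A (V 1))) + 32 * toN (decide (B < val A (V 9))) + 64 * toN (decide (B < val A (V 3))) + 128 * toN (decide (B < val A (V 11)))) = true := by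
      rw [hv4_0, hv4_1, hv4_2, hv4_3, hv4_4, hv4_5, hv4_6, hv4_7]
      exact thr3 (0:ℝ) (A 3) (A 1) (A 0) B nn4_0 nn4_1 nn4_2 nn4_3 nn4_4 nn4_5 nn4_6 nn4_7
    have hv5_0 : val A (V 4) = A 2 := by
      simp [val, Fin.sum_univ_four, show V 4 = ![false,false,true,false] from by decide]
      try ring
    have nn5_0 : A 2 ≠ B := by rw [← hv5_0]; exact hvert (V 4)
    have hv5_1 : val A (V 12) = A 2 + A 3 := by
      simp [val, Fin.sum_univ_four, show V 12 = ![false,false,true,true] from by decide]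
      try ring
    have nn5_1 : A 2 + A 3 ≠ B := by rw [← hv5_1]; exact hvert (V 12)
    have hv5_2 : val A (V 6) = A 2 + A 1 := by
      simp [val, Fin.sum_univ_four, show V 6 = ![false,true,true,false] from by decide]
      try ring
    have nn5_2 : A 2 + A 1 ≠ B := by rw [← hv5_2]; exact hvert (V 6)
    have hv5_3 : val A (V 14) = A 2 + A 3 + A 1 := by
      simp [val, Fin.sum_univ_four, show V 14 = ![false,true,true,true] from by decide]
      try ring
    have nn5_3 : A 2 + A 3 + A 1 ≠ B := by rw [← hv5_3]; exact hvert (V 14)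
    have hv5_4 : val A (V 5) = A 2 + A 0 := by
      simp [val, Fin.sum_univ_four, show V 5 = ![true,false,true,false] from by decide]
      try ring
    have nn5_4 : A 2 + A 0 ≠ B := by rw [← hv5_4]; exact hvert (V 5)
    have hv5_5 : val A (V 13) = A 2 + A 3 + A 0 := by
      simp [val, Fin.sum_univ_four, show V 13 = ![true,false,true,true] from by decide]
      try ring
    have nn5_5 : A 2 + A 3 + A 0 ≠ B := by rw [← hv5_5]; exact hvert (V 13)
    have hv5_6 : val A (V 7) = A 2 + A 1 + A 0 := by
      simp [val, Fin.sum_univ_four, show V 7 = ![true,true,true,false] from by decide]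
      try ring
    have nn5_6 : A 2 + A 1 + A 0 ≠ B := by rw [← hv5_6]; exact hvert (V 7)
    have hv5_7 : val A (V 15) = A 2 + A 3 + A 1 + A 0 := by
      simp [val, Fin.sum_univ_four, show V 15 = ![true,true,true,true] from by decide]
      try ring
    have nn5_7 : A 2 + A 3 + A 1 + A 0 ≠ B := by rw [← hv5_7]; exact hvert (V 15)
    have G5 : Nat.testBit thrMask (toN (decide (B < val A (V 4))) + 2 * toN (decide (B < val A (V 12))) + 4 * toN (decide (B < val A (V 6))) + 8 * toN (decide (B < val A (V 14))) + 16 * toN (decide (B < val A (V 5))) + 32 * toN (decide (B < val A (V 13))) + 64 * toN (decide (B < val A (V 7))) + 128 * toN (decide (B < val A (V 15)))) = true := by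
      rw [hv5_0, hv5_1, hv5_2, hv5_3, hv5_4, hv5_5, hv5_6, hv5_7]
      exact thr3 (A 2) (A 3) (A 1) (A 0) B nn5_0 nn5_1 nn5_2 nn5_3 nn5_4 nn5_5 nn5_6 nn5_7
    have hv6_0 : val A (V 0) = (0:ℝ) := by
      simp [val, Fin.sum_univ_four, show V 0 = ![false,false,false,false] from by decide]
      try ring
    have nn6_0 : (0:ℝ) ≠ B := by rw [← hv6_0]; exact hvert (V 0)
    have hv6_1 : val A (V 4) = (0:ℝ) + A 2 := by
      simp [val, Fin.sum_univ_four, show V 4 = ![false,false,true,false] from by decide]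
      try ring
    have nn6_1 : (0:ℝ) + A 2 ≠ B := by rw [← hv6_1]; exact hvert (V 4)
    have hv6_2 : val A (V 2) = (0:ℝ) + A 1 := by
      simp [val, Fin.sum_univ_four, show V 2 = ![false,true,false,false] from by decide]
      try ring
    have nn6_2 : (0:ℝ) + A 1 ≠ B := by rw [← hv6_2]; exact hvert (V 2)
    have hv6_3 : val A (V 6) = (0:ℝ) + A 2 + A 1 := by
      simp [val, Fin.sum_univ_four, show V 6 = ![false,true,true,false] from by decide]
      try ring
    have nn6_3 : (0:ℝ) + A 2 + A 1 ≠ B := by rw [← hv6_3]; exact hvert (V 6)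
    have hv6_4 : val A (V 1) = (0:ℝ) + A 0 := by
      simp [val, Fin.sum_univ_four, show V 1 = ![true,false,false,false] from by decide]
      try ring
    have nn6_4 : (0:ℝ) + A 0 ≠ B := by rw [← hv6_4]; exact hvert (V 1)
    have hv6_5 : val A (V 5) = (0:ℝ) + A 2 + A 0 := by
      simp [val, Fin.sum_univ_four, show V 5 = ![true,false,true,false] from by decide]
      try ring
    have nn6_5 : (0:ℝ) + A 2 + A 0 ≠ B := by rw [← hv6_5]; exact hvert (V 5)
    have hv6_6 : val A (V 3) = (0:ℝ) + A 1 + A 0 := by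
      simp [val, Fin.sum_univ_four, show V 3 = ![true,true,false,false] from by decide]
      try ring
    have nn6_6 : (0:ℝ) + A 1 + A 0 ≠ B := by rw [← hv6_6]; exact hvert (V 3)
    have hv6_7 : val A (V 7) = (0:ℝ) + A 2 + A 1 + A 0 := by
      simp [val, Fin.sum_univ_four, show V 7 = ![true,true,true,false] from by decide]
      try ring
    have nn6_7 : (0:ℝ) + A 2 + A 1 + A 0 ≠ B := by rw [← hv6_7]; exact hvert (V 7)
    have G6 : Nat.testBit thrMask (toN (decide (B < val A (V 0))) + 2 * toN (decide (B < val A (V 4))) + 4 * toN (decide (B < val A (V 2))) + 8 * toN (decide (B < val A (V 6))) + 16 * toN (decide (B < val A (V 1))) + 32 * toN (decide (B < val A (V 5))) + 64 * toN (decide (B < val A (V 3))) + 128 * toN (decide (B < val A (V 7)))) = true := by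
      rw [hv6_0, hv6_1, hv6_2, hv6_3, hv6_4, hv6_5, hv6_6, hv6_7]
      exact thr3 (0:ℝ) (A 2) (A 1) (A 0) B nn6_0 nn6_1 nn6_2 nn6_3 nn6_4 nn6_5 nn6_6 nn6_7
    have hv7_0 : val A (V 8) = A 3 := by
      simp [val, Fin.sum_univ_four, show V 8 = ![false,false,false,true] from by decide]
      try ring
    have nn7_0 : A 3 ≠ B := by rw [← hv7_0]; exact hvert (V 8)
    have hv7_1 : val A (V 12) = A 3 + A 2 := by
      simp [val, Fin.sum_univ_four, show V 12 = ![false,false,true,true] from by decide]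
      try ring
    have nn7_1 : A 3 + A 2 ≠ B := by rw [← hv7_1]; exact hvert (V 12)
    have hv7_2 : val A (V 10) = A 3 + A 1 := by
      simp [val, Fin.sum_univ_four, show V 10 = ![false,true,false,true] from by decide]
      try ring
    have nn7_2 : A 3 + A 1 ≠ B := by rw [← hv7_2]; exact hvert (V 10)
    have hv7_3 : val A (V 14) = A 3 + A 2 + A 1 := by
      simp [val, Fin.sum_univ_four, show V 14 = ![false,true,true,true] from by decide]
      try ring
    have nn7_3 : A 3 + A 2 + A 1 ≠ B := by rw [← hv7_3]; exact hvert (V 14)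
    have hv7_4 : val A (V 9) = A 3 + A 0 := by
      simp [val, Fin.sum_univ_four, show V 9 = ![true,false,false,true] from by decide]
      try ring
    have nn7_4 : A 3 + A 0 ≠ B := by rw [← hv7_4]; exact hvert (V 9)
    have hv7_5 : val A (V 13) = A 3 + A 2 + A 0 := by
      simp [val, Fin.sum_univ_four, show V 13 = ![true,false,true,true] from by decide]
      try ring
    have nn7_5 : A 3 + A 2 + A 0 ≠ B := by rw [← hv7_5]; exact hvert (V 13)
    have hv7_6 : val A (V 11) = A 3 + A 1 + A 0 := by
      simp [val, Fin.sum_univ_four, show V 11 = ![true,true,false,true] from by decide]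
      try ring
    have nn7_6 : A 3 + A 1 + A 0 ≠ B := by rw [← hv7_6]; exact hvert (V 11)
    have hv7_7 : val A (V 15) = A 3 + A 2 + A 1 + A 0 := by
      simp [val, Fin.sum_univ_four, show V 15 = ![true,true,true,true] from by decide]
      try ring
    have nn7_7 : A 3 + A 2 + A 1 + A 0 ≠ B := by rw [← hv7_7]; exact hvert (V 15)
    have G7 : Nat.testBit thrMask (toN (decide (B < val A (V 8))) + 2 * toN (decide (B < val A (V 12))) + 4 * toN (decide (B < val A (V 10))) + 8 * toN (decide (B < val A (V 14))) + 16 * toN (decide (B < val A (V 9))) + 32 * toN (decide (B < val A (V 13))) + 64 * toN (decide (B < val A (V 11))) + 128 * toN (decide (B < val A (V 15)))) = true := by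
      rw [hv7_0, hv7_1, hv7_2, hv7_3, hv7_4, hv7_5, hv7_6, hv7_7]
      exact thr3 (A 3) (A 2) (A 1) (A 0) B nn7_0 nn7_1 nn7_2 nn7_3 nn7_4 nn7_5 nn7_6 nn7_7
    have key := comb (decide (B < val A (V 0))) (decide (B < val A (V 1))) (decide (B < val A (V 2))) (decide (B < val A (V 3))) (decide (B < val A (V 4))) (decide (B < val A (V 5))) (decide (B < val A (V 6))) (decide (B < val A (V 7))) (decide (B < val A (V 8))) (decide (B < val A (V 9))) (decide (B < val A (V 10))) (decide (B < val A (V 11))) (decide (B < val A (V 12))) (decide (B < val A (V 13))) (decide (B < val A (V 14))) (decide (B < val A (V 15))) ⟨G0, G1, G2, G3, G4, G5, G6, G7⟩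
    simpa [L] using key

/-- There is no arrangement of at most `5` hyperplanes in `ℝ^4` that slices each edge of
the `4`-dimensional unit cube at least twice. -/
theorem no_five_hyperplanes_double_cover_4cube :
    ¬ ∃ (k : ℕ) (_ : k ≤ 5) (a : Fin k → Fin 4 → ℝ) (b : Fin k → ℝ),
      (∀ i, a i ≠ 0) ∧
      ∀ u w : Fin 4 → Bool, hammingDist u w = 1 →
        2 ≤ {i : Fin k | SlicesEdge 4 (a i) (b i) u w}.ncard := by
  classical
  rintro ⟨k, hk, a, b, -, H⟩
  have hcard : ∀ u w : Fin 4 → Bool, hammingDist u w = 1 →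
      2 ≤ (Finset.univ.filter fun i => SlicesEdge 4 (a i) (b i) u w).card := by
    intro u w h
    have h2 := H u w h
    have hset : {i : Fin k | SlicesEdge 4 (a i) (b i) u w}
        = ↑(Finset.univ.filter fun i => SlicesEdge 4 (a i) (b i) u w) := by
      ext i; simp
    rwa [hset, Set.ncard_coe_finset] at h2
  have hdist : ∀ p ∈ L, hammingDist (V p.1) (V p.2) = 1 := by decide
  have hlow : 128 ≤
      (L.map fun p => (Finset.univ.filter fun i =>
        SlicesEdge 4 (a i) (b i) (V p.1) (V p.2)).card).sum := by
    have hfa : ∀ x ∈ (L.map fun p => (Finset.univ.filter fun i =>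
        SlicesEdge 4 (a i) (b i) (V p.1) (V p.2)).card), 2 ≤ x := by
      intro x hx
      obtain ⟨p, hp, rfl⟩ := List.mem_map.mp hx
      exact hcard _ _ (hdist p hp)
    have h := two_mul_length_le_sum _ hfa
    rw [List.length_map, show L.length = 64 from rfl] at h
    omega
  have hswap : (L.map fun p => (Finset.univ.filter fun i =>
        SlicesEdge 4 (a i) (b i) (V p.1) (V p.2)).card).sum
      = ∑ i : Fin k, (L.map fun p =>
          if SlicesEdge 4 (a i) (b i) (V p.1) (V p.2) then 1 else 0).sum := by
    rw [← swapLemma (fun i p => if SlicesEdge 4 (a i) (b i) (V p.1) (V p.2) then 1 else 0) L]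
    have hfg : (fun p : ℕ × ℕ => (Finset.univ.filter fun i =>
          SlicesEdge 4 (a i) (b i) (V p.1) (V p.2)).card)
        = (fun p : ℕ × ℕ => ∑ i : Fin k,
            if SlicesEdge 4 (a i) (b i) (V p.1) (V p.2) then 1 else 0) := by
      funext p
      rw [Finset.card_filter]
    rw [hfg]
  have hper : ∀ i : Fin k, (L.map fun p =>
      if SlicesEdge 4 (a i) (b i) (V p.1) (V p.2) then 1 else 0).sum ≤ 24 := by
    intro i
    by_cases hex : ∃ p ∈ L, SlicesEdge 4 (a i) (b i) (V p.1) (V p.2)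
    · obtain ⟨p0, hp0, hs0⟩ := hex
      have hvert : ∀ z : Fin 4 → Bool, val (a i) z ≠ b i := hs0.1
      calc (L.map fun p =>
          if SlicesEdge 4 (a i) (b i) (V p.1) (V p.2) then 1 else 0).sum
          ≤ (L.map fun p => if decide (b i < val (a i) (V p.1)) ≠ decide (b i < val (a i) (V p.2))
              then 1 else 0).sum := by
            apply List.sum_le_sum
            intro p hp
            split_ifs with hA hB hB
            · exact le_refl 1
            · exact absurd (slice_sign hA) hB
            · exact Nat.zero_le 1
            · exact le_refl 0
        _ ≤ 24 := perPlane hvert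
    · push_neg at hex
      have : (L.map fun p =>
          if SlicesEdge 4 (a i) (b i) (V p.1) (V p.2) then 1 else 0).sum = 0 := by
        apply List.sum_eq_zero
        intro x hx
        obtain ⟨p, hp, rfl⟩ := List.mem_map.mp hx
        simp [hex p hp]
      omega
  have htot : ∑ i : Fin k, (L.map fun p =>
      if SlicesEdge 4 (a i) (b i) (V p.1) (V p.2) then 1 else 0).sum ≤ k * 24 := by
    calc ∑ i : Fin k, (L.map fun p =>
        if SlicesEdge 4 (a i) (b i) (V p.1) (V p.2) then 1 else 0).sum
        ≤ (Finset.univ : Finset (Fin k)).card * 24 :=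
          Finset.sum_le_card_nsmul _ _ 24 (fun i _ => hper i)
      _ = k * 24 := by simp
  rw [hswap] at hlow
  have : (128 : ℕ) ≤ k * 24 := le_trans hlow htot
  omega
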